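/- arXiv:1007.1737 — 4 statements merged into one kernel-verified Lean document; each statement's English description precedes it below -/
import Mathlib

section
/- Let x : ℝ → ℝ² be a twice differentiable curve. The areal velocity t ↦ (1/2)(x(t) × x'(t)) is constant on ℝ if and only if for every t ∈ ℝ the acceleration is centripetal, i.e. x(t) × x''(t) = 0 (the acceleration x''(t) is collinear with the position vector x(t)). (Kepler's second law holds if and only if the force is directed toward the center.) -/
noncomputable section

/-- Planar cross product `u × v = u₁v₂ − u₂v₁` on `ℝ²`. -/
def cross (u v : EuclideanSpace ℝ (Fin 2)) : ℝ := u 0 * v 1 - u 1 * v 0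

lemma hasDerivAt_cross (x : ℝ → EuclideanSpace ℝ (Fin 2))
    (hx : Differentiable ℝ x) (hx' : Differentiable ℝ (deriv x)) (t : ℝ) :
    HasDerivAt (fun s => cross (x s) (deriv x s))
      (cross (x t) (deriv (deriv x) t)) t := by
  have h1 : HasDerivAt x (deriv x t) t := (hx t).hasDerivAt
  have h2 : HasDerivAt (deriv x) (deriv (deriv x) t) t := (hx' t).hasDerivAt
  have c1 : ∀ i, HasDerivAt (fun s => x s i) (deriv x t i) t := by
    intro i
    exact (EuclideanSpace.proj i).hasFDerivAt.comp_hasDerivAt t h1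
  have c2 : ∀ i, HasDerivAt (fun s => deriv x s i) (deriv (deriv x) t i) t := by
    intro i
    exact (EuclideanSpace.proj i).hasFDerivAt.comp_hasDerivAt t h2
  have := ((c1 0).mul (c2 1)).sub ((c1 1).mul (c2 0))
  convert this using 1
  all_goals first | rfl | (funext s; simp [cross]) | (simp only [cross]; ring)

/-- Kepler's second law (constant areal velocity) holds if and only if the
acceleration is centripetal (collinear with the position vector). -/
theorem arealVelocity_const_iff_centripetal
    (x : ℝ → EuclideanSpace ℝ (Fin 2))
    (hx : Differentiable ℝ x)
    (hx' : Differentiable ℝ (deriv x)) :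
    (∃ c : ℝ, ∀ t : ℝ, (1 / 2) * cross (x t) (deriv x t) = c) ↔
      (∀ t : ℝ, cross (x t) (deriv (deriv x) t) = 0) := by
  constructor
  · rintro ⟨c, hc⟩ t
    have hconst : (fun s => cross (x s) (deriv x s)) = fun _ => 2 * c := by
      funext s
      have := hc s
      linarith
    have h := hasDerivAt_cross x hx hx' t
    rw [hconst] at h
    have : cross (x t) (deriv (deriv x) t) = deriv (fun _ : ℝ => 2 * c) t :=
      h.deriv.symm
    simpa using this
  · intro h
    refine ⟨(1/2) * cross (x 0) (deriv x 0), fun t => ?_⟩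
    have hconst : ∀ s, cross (x s) (deriv x s) = cross (x 0) (deriv x 0) := by
      have hd : ∀ s, HasDerivAt (fun s => cross (x s) (deriv x s)) 0 s := by
        intro s
        have := hasDerivAt_cross x hx hx' s
        rwa [h s] at this
      intro s
      exact is_const_of_deriv_eq_zero
        (fun u => (hd u).differentiableAt) (fun u => (hd u).deriv) s 0
    rw [hconst t]
end
end

section
/- Let x : ℝ → ℝ² be a twice differentiable curve, let a > 0, T > 0, and let f ∈ ℝ² with ‖f‖ < 2a. Assume: (i) for every t, ‖x(t)‖ + ‖x(t) − f‖ = 2a and x(t) ≠ 0 (the orbit is an ellipse with semi-major axis a and one focus at the origin — Kepler's first law); (ii) for every t, x(t) × x'(t) = 2πab/T, where b := √(a² − ‖f‖²/4) is the semi-minor axis (Kepler's second law, with the full area πab of the ellipse swept out in one period T). Then for every t the acceleration points toward the origin with magnitude (π²/2)·(2a)³/T² · 1/‖x(t)‖², i.e. x''(t) = −(4π²a³/T²)·(1/‖x(t)‖³) • x(t). -/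
noncomputable section

lemma comp_hasDerivAt (g : ℝ → EuclideanSpace ℝ (Fin 2)) (hg : Differentiable ℝ g)
    (i : Fin 2) (s : ℝ) : HasDerivAt (fun u => g u i) (deriv g s i) s := by
  have h := (hg s).hasDerivAt
  have := (EuclideanSpace.proj i : EuclideanSpace ℝ (Fin 2) →L[ℝ] ℝ).hasFDerivAt.comp_hasDerivAt s h
  exact this

lemma norm_sq_two (u : EuclideanSpace ℝ (Fin 2)) : ‖u‖ ^ 2 = (u 0) ^ 2 + (u 1) ^ 2 := by
  rw [EuclideanSpace.norm_eq, Real.sq_sqrt (by positivity)]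
  simp [Fin.sum_univ_two, sq_abs]

/-- The purely algebraic heart of the argument. -/
lemma kepler_algebra (a c R α L f0 f1 p0 p1 v0 v1 w0 w1 rd wd : ℝ)
    (ha : a ≠ 0) (hR : R ≠ 0) (hα : α ≠ 0)
    (hL2α : L ^ 2 = c * α)
    (hrt : 2 * a * R = 2 * a * α + (p0 * f0 + p1 * f1))
    (hEt : R ^ 2 = p0 ^ 2 + p1 ^ 2)
    (hrd : 2 * a * rd = v0 * f0 + v1 * f1)
    (hwd : 2 * a * wd = w0 * f0 + w1 * f1)
    (hFt : R * rd = p0 * v0 + p1 * v1)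
    (hStar : rd * rd + R * wd = v0 * v0 + p0 * w0 + (v1 * v1 + p1 * w1))
    (hGt : p0 * v1 - p1 * v0 = L)
    (hCross2 : p0 * w1 - p1 * w0 = 0) :
    w0 = (-c * (1 / R ^ 3)) * p0 ∧ w1 = (-c * (1 / R ^ 3)) * p1 := by
  have h2a : (2 * a : ℝ) ≠ 0 := by simpa using ha
  have hw0p : w0 * R ^ 2 = (p0 * w0 + p1 * w1) * p0 := by
    linear_combination w0 * hEt - p1 * hCross2
  have hw1p : w1 * R ^ 2 = (p0 * w0 + p1 * w1) * p1 := by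
    linear_combination w1 * hEt + p0 * hCross2
  have hLag : R ^ 2 * (v0 ^ 2 + v1 ^ 2) = (R * rd) ^ 2 + L ^ 2 := by
    linear_combination (v0 ^ 2 + v1 ^ 2) * hEt - (R * rd + p0 * v0 + p1 * v1) * hFt
      + (p0 * v1 - p1 * v0 + L) * hGt
  have h3 : R ^ 3 * wd = L ^ 2 + R ^ 2 * (p0 * w0 + p1 * w1) := by
    linear_combination R ^ 2 * hStar + hLag
  have h4' : 2 * a * (wd * R ^ 2) = 2 * a * ((p0 * w0 + p1 * w1) * (R - α)) := by
    linear_combination R ^ 2 * hwd + f0 * hw0p + f1 * hw1p - (p0 * w0 + p1 * w1) * hrt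
  have h4 : wd * R ^ 2 = (p0 * w0 + p1 * w1) * (R - α) := mul_left_cancel₀ h2a h4'
  have hD2a : 2 * a * ((p0 * w0 + p1 * w1) * R * α) = 2 * a * (-L ^ 2) := by
    linear_combination R * h4' - 2 * a * h3
  have hD : (p0 * w0 + p1 * w1) * R * α = -L ^ 2 := mul_left_cancel₀ h2a hD2a
  have h6 : ((p0 * w0 + p1 * w1) * R) * α = (-c) * α := by
    linear_combination hD - hL2α
  have hDR : (p0 * w0 + p1 * w1) * R = -c := mul_right_cancel₀ hα h6
  have hR3 : (R : ℝ) ^ 3 ≠ 0 := pow_ne_zero 3 hR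
  constructor
  · have hg : w0 * R ^ 3 = -c * p0 := by linear_combination R * hw0p + p0 * hDR
    field_simp
    linear_combination hg
  · have hg : w1 * R ^ 3 = -c * p1 := by linear_combination R * hw1p + p1 * hDR
    field_simp
    linear_combination hg

/-- Kepler's first and second laws imply that the acceleration points toward
the Sun with magnitude `(π²/2)·(2a)³/T² · 1/r² = 4π²a³/T² · 1/r²`. -/
theorem kepler_first_second_implies_inverse_square
    (x : ℝ → EuclideanSpace ℝ (Fin 2))
    (hx : Differentiable ℝ x) (hx' : Differentiable ℝ (deriv x))
    (a T : ℝ) (ha : 0 < a) (hT : 0 < T)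
    (f : EuclideanSpace ℝ (Fin 2)) (hf : ‖f‖ < 2 * a)
    (hellipse : ∀ t : ℝ, ‖x t‖ + ‖x t - f‖ = 2 * a)
    (hne : ∀ t : ℝ, x t ≠ 0)
    (harea : ∀ t : ℝ,
      cross (x t) (deriv x t) =
        2 * Real.pi * a * Real.sqrt (a ^ 2 - ‖f‖ ^ 2 / 4) / T) :
    ∀ t : ℝ,
      deriv (deriv x) t =
        (-(4 * Real.pi ^ 2 * a ^ 3 / T ^ 2) * (1 / ‖x t‖ ^ 3)) • x t := by
  have ha' : (a : ℝ) ≠ 0 := ne_of_gt ha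
  have hT' : (T : ℝ) ≠ 0 := ne_of_gt hT
  have hfn : 0 ≤ ‖f‖ := norm_nonneg f
  have hb2 : 0 < a ^ 2 - ‖f‖ ^ 2 / 4 := by nlinarith
  have hαeq : a - ‖f‖ ^ 2 / (4 * a) = (a ^ 2 - ‖f‖ ^ 2 / 4) / a := by field_simp
  have hα : 0 < a - ‖f‖ ^ 2 / (4 * a) := by rw [hαeq]; positivity
  set L : ℝ := 2 * Real.pi * a * Real.sqrt (a ^ 2 - ‖f‖ ^ 2 / 4) / T with hL_def
  have hL2 : L ^ 2 = 4 * Real.pi ^ 2 * a ^ 2 * (a ^ 2 - ‖f‖ ^ 2 / 4) / T ^ 2 := by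
    rw [hL_def, div_pow]
    rw [show (2 * Real.pi * a * Real.sqrt (a ^ 2 - ‖f‖ ^ 2 / 4)) ^ 2
        = 4 * Real.pi ^ 2 * a ^ 2 * Real.sqrt (a ^ 2 - ‖f‖ ^ 2 / 4) ^ 2 by ring,
      Real.sq_sqrt hb2.le]
  have hL2α : L ^ 2 = (4 * Real.pi ^ 2 * a ^ 3 / T ^ 2) * (a - ‖f‖ ^ 2 / (4 * a)) := by
    rw [hL2]; field_simp
  have hff : ‖f‖ ^ 2 = (f 0) ^ 2 + (f 1) ^ 2 := norm_sq_two f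
  -- the linear relation 2a‖x s‖ = 2a² − ‖f‖²/2 + ⟨x s, f⟩
  have hlin : ∀ s : ℝ, 2 * a * ‖x s‖ =
      2 * a ^ 2 - ‖f‖ ^ 2 / 2 + (x s 0 * f 0 + x s 1 * f 1) := by
    intro s
    have h1 : ‖x s - f‖ = 2 * a - ‖x s‖ := by linarith [hellipse s]
    have h2 : ‖x s - f‖ ^ 2 = (2 * a - ‖x s‖) ^ 2 := by rw [h1]
    have h3 : ‖x s - f‖ ^ 2 = (x s 0 - f 0) ^ 2 + (x s 1 - f 1) ^ 2 := by
      have := norm_sq_two (x s - f); simpa using this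
    have h4 : ‖x s‖ ^ 2 = (x s 0) ^ 2 + (x s 1) ^ 2 := norm_sq_two (x s)
    rw [h3] at h2
    have h5 : 4 * a * ‖x s‖ =
        4 * a ^ 2 - ((f 0) ^ 2 + (f 1) ^ 2) + 2 * (x s 0 * f 0 + x s 1 * f 1) := by
      linear_combination h2 + h4
    linear_combination h5 / 2 + hff / 2
  -- r as a differentiable function equal to the norm
  set r : ℝ → ℝ := fun s =>
    (a - ‖f‖ ^ 2 / (4 * a)) + (x s 0 * f 0 + x s 1 * f 1) / (2 * a) with hr_def
  have hrx : ∀ s, ‖x s‖ = r s := by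
    intro s
    rw [hr_def]
    field_simp
    linear_combination 4 * hlin s
  intro t
  have hRpos : 0 < ‖x t‖ := norm_pos_iff.mpr (hne t)
  have hX := comp_hasDerivAt x hx
  have hV := comp_hasDerivAt (deriv x) hx'
  have hr_deriv : ∀ s, HasDerivAt r ((deriv x s 0 * f 0 + deriv x s 1 * f 1) / (2 * a)) s := by
    intro s
    exact (((hX 0 s).mul_const (f 0)).add ((hX 1 s).mul_const (f 1))).div_const (2*a)
      |>.const_add _
  have hE : ∀ s, r s ^ 2 = (x s 0) ^ 2 + (x s 1) ^ 2 := by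
    intro s; rw [← hrx s]; exact norm_sq_two (x s)
  -- F : r * r' = x·x'
  have hF : ∀ s, r s * ((deriv x s 0 * f 0 + deriv x s 1 * f 1) / (2 * a))
      = x s 0 * deriv x s 0 + x s 1 * deriv x s 1 := by
    intro s
    have h1 := (hr_deriv s).pow 2
    have h2 := ((hX 0 s).pow 2).add ((hX 1 s).pow 2)
    have heq : (fun u => r u ^ 2) = fun u => (x u 0) ^ 2 + (x u 1) ^ 2 := funext hE
    simp only [Pi.pow_def] at h1; rw [heq] at h1
    have h3 := h1.unique h2
    push_cast at h3
    linear_combination h3 / 2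
  -- differentiate F at t
  have hStar : ((deriv x t 0 * f 0 + deriv x t 1 * f 1) / (2 * a))
        * ((deriv x t 0 * f 0 + deriv x t 1 * f 1) / (2 * a))
      + r t * ((deriv (deriv x) t 0 * f 0 + deriv (deriv x) t 1 * f 1) / (2 * a))
      = deriv x t 0 * deriv x t 0 + x t 0 * deriv (deriv x) t 0
        + (deriv x t 1 * deriv x t 1 + x t 1 * deriv (deriv x) t 1) := by
    have hrd : HasDerivAt (fun s => (deriv x s 0 * f 0 + deriv x s 1 * f 1) / (2 * a))
        ((deriv (deriv x) t 0 * f 0 + deriv (deriv x) t 1 * f 1) / (2 * a)) t :=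
      (((hV 0 t).mul_const (f 0)).add ((hV 1 t).mul_const (f 1))).div_const (2*a)
    have h1 := (hr_deriv t).mul hrd
    have h2 := ((hX 0 t).mul (hV 0 t)).add ((hX 1 t).mul (hV 1 t))
    have heq : (fun s => r s * ((deriv x s 0 * f 0 + deriv x s 1 * f 1) / (2 * a)))
        = fun s => x s 0 * deriv x s 0 + x s 1 * deriv x s 1 := funext hF
    simp only [Pi.mul_def] at h1; rw [heq] at h1
    exact h1.unique h2
  -- cross product: value and derivative of the constant function
  have hGt : x t 0 * deriv x t 1 - x t 1 * deriv x t 0 = L := harea t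
  have hCross2 : x t 0 * deriv (deriv x) t 1 - x t 1 * deriv (deriv x) t 0 = 0 := by
    have h1 := ((hX 0 t).mul (hV 1 t)).sub ((hX 1 t).mul (hV 0 t))
    have heq : (fun s => x s 0 * deriv x s 1 - x s 1 * deriv x s 0) = fun _ : ℝ => L := by
      funext s; exact harea s
    simp only [Pi.mul_def, Pi.sub_def] at h1; rw [heq] at h1
    have h2 := h1.unique (hasDerivAt_const t L)
    linear_combination h2
  -- apply the algebraic lemma with R := ‖x t‖
  have hrt2 : r t = (a - ‖f‖ ^ 2 / (4 * a)) + (x t 0 * f 0 + x t 1 * f 1) / (2 * a) := rfl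
  rw [← hrx t] at hStar
  have h2aA : 2 * a * (a - ‖f‖ ^ 2 / (4 * a)) = 2 * a ^ 2 - ‖f‖ ^ 2 / 2 := by
    field_simp; ring
  obtain ⟨e0, e1⟩ := kepler_algebra a (4 * Real.pi ^ 2 * a ^ 3 / T ^ 2) (‖x t‖)
      (a - ‖f‖ ^ 2 / (4 * a)) L (f 0) (f 1) (x t 0) (x t 1)
      (deriv x t 0) (deriv x t 1) (deriv (deriv x) t 0) (deriv (deriv x) t 1)
      ((deriv x t 0 * f 0 + deriv x t 1 * f 1) / (2 * a))
      ((deriv (deriv x) t 0 * f 0 + deriv (deriv x) t 1 * f 1) / (2 * a))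
      ha' (ne_of_gt hRpos) (ne_of_gt hα) hL2α
      (by linear_combination hlin t - h2aA)
      (norm_sq_two (x t))
      (by field_simp)
      (by field_simp)
      (by have := hF t; rw [← hrx t] at this; linear_combination this)
      hStar hGt hCross2
  ext i
  fin_cases i
  · simpa using e0
  · simpa using e1
end
end

section
/- Let x : ℝ → ℝ² be a twice differentiable curve with x(t) ≠ 0 for all t, let K > 0, and assume the acceleration is centripetal with magnitude inversely proportional to the square of the distance: x''(t) = −(K/‖x(t)‖³) • x(t) for all t. Then: (i) the areal velocity (1/2)(x(t) × x'(t)) is constant, equal to h/2 for some constant h ∈ ℝ (Kepler's second law); and (ii) the orbit is a conic section with focus at the origin: there exists a vector E ∈ ℝ² (the eccentricity vector) such that for every t, ‖x(t)‖ + ⟨E, x(t)⟩ = h²/K, where h is the constant from (i). -/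
open RealInnerProductSpace

noncomputable section

private lemma aux1 (u0 u1 v0 v1 r K : ℝ) (hK : 0 < K) (hr : 0 < r)
    (h2 : r ^ 2 = u0 ^ 2 + u1 ^ 2) :
    (u0 * v1 - u1 * v0) / K * (-(K / r ^ 3) * u1) -
      (v0 * r - u0 * ((u0 * v0 + u1 * v1) / r)) / r ^ 2 = 0 := by
  have hrne := hr.ne'
  have hKne := hK.ne'
  field_simp
  linear_combination (-v0) * h2

private lemma aux2 (u0 u1 v0 v1 r K : ℝ) (hK : 0 < K) (hr : 0 < r)
    (h2 : r ^ 2 = u0 ^ 2 + u1 ^ 2) :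
    -((u0 * v1 - u1 * v0) / K * (-(K / r ^ 3) * u0)) -
      (v1 * r - u1 * ((u0 * v0 + u1 * v1) / r)) / r ^ 2 = 0 := by
  have hrne := hr.ne'
  have hKne := hK.ne'
  field_simp
  linear_combination (-v1) * h2

private lemma aux3 (u0 u1 v0 v1 r K : ℝ) (hK : 0 < K) (hr : 0 < r)
    (h2 : r ^ 2 = u0 ^ 2 + u1 ^ 2) :
    r + (((u0 * v1 - u1 * v0) / K * v1 - u0 / r) * u0 +
      (-((u0 * v1 - u1 * v0) / K * v0) - u1 / r) * u1)
      = (u0 * v1 - u1 * v0) ^ 2 / K := by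
  have hrne := hr.ne'
  have hKne := hK.ne'
  field_simp
  linear_combination K * h2

/-- A centripetal inverse-square acceleration implies Kepler's second law
(constant areal velocity `h/2`) and that the orbit is a conic section with
focus at the origin: `‖x(t)‖ + ⟨E, x(t)⟩ = h²/K` for some eccentricity
vector `E`. -/
theorem inverse_square_implies_area_law_and_conic
    (x : ℝ → EuclideanSpace ℝ (Fin 2))
    (hx : Differentiable ℝ x) (hx' : Differentiable ℝ (deriv x))
    (h0 : ∀ t : ℝ, x t ≠ 0) (K : ℝ) (hK : 0 < K)
    (hacc : ∀ t : ℝ, deriv (deriv x) t = (-(K / ‖x t‖ ^ 3)) • x t) :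
    ∃ h : ℝ,
      (∀ t : ℝ, (1 / 2) * cross (x t) (deriv x t) = h / 2) ∧
      ∃ E : EuclideanSpace ℝ (Fin 2),
        ∀ t : ℝ, ‖x t‖ + ⟪E, x t⟫ = h ^ 2 / K := by
  classical
  have rpos : ∀ t, 0 < ‖x t‖ := fun t => norm_pos_iff.mpr (h0 t)
  have rne : ∀ t, ‖x t‖ ≠ 0 := fun t => ne_of_gt (rpos t)
  have hproj : ∀ (f : ℝ → EuclideanSpace ℝ (Fin 2)), Differentiable ℝ f →
      ∀ (i : Fin 2) (t : ℝ), HasDerivAt (fun s => f s i) (deriv f t i) t := by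
    intro f hf i t
    exact (EuclideanSpace.proj i).hasFDerivAt.comp_hasDerivAt t (hf t).hasDerivAt
  have hux : ∀ (i : Fin 2) (t : ℝ), HasDerivAt (fun s => x s i) (deriv x t i) t :=
    hproj x hx
  have hvx : ∀ (i : Fin 2) (t : ℝ), HasDerivAt (fun s => deriv x s i)
      ((-(K / ‖x t‖ ^ 3)) * x t i) t := by
    intro i t
    have h1 := hproj (deriv x) hx' i t
    rw [hacc t] at h1
    simpa using h1
  have hr2 : ∀ t, ‖x t‖ ^ 2 = x t 0 ^ 2 + x t 1 ^ 2 := by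
    intro t
    rw [EuclideanSpace.norm_eq, Real.sq_sqrt (by positivity)]
    simp [Fin.sum_univ_two, Real.norm_eq_abs, sq_abs]
  have hrd : ∀ t, HasDerivAt (fun s => ‖x s‖)
      ((x t 0 * deriv x t 0 + x t 1 * deriv x t 1) / ‖x t‖) t := by
    intro t
    have hq : HasDerivAt (fun s => x s 0 ^ 2 + x s 1 ^ 2)
        (2 * x t 0 * deriv x t 0 + 2 * x t 1 * deriv x t 1) t := by
      have h1 := (hux 0 t).pow 2
      have h2 := (hux 1 t).pow 2
      have := h1.add h2
      convert this using 1
      all_goals first | rfl | (push_cast; ring)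
    have hne : x t 0 ^ 2 + x t 1 ^ 2 ≠ 0 := by
      rw [← hr2 t]; exact pow_ne_zero 2 (rne t)
    have hs := (Real.hasDerivAt_sqrt hne).comp t hq
    rw [Function.comp_def] at hs
    have hfun : (fun s => Real.sqrt (x s 0 ^ 2 + x s 1 ^ 2)) = fun s => ‖x s‖ := by
      funext s
      rw [← hr2 s, Real.sqrt_sq (norm_nonneg _)]
    rw [hfun] at hs
    have hval : 1 / (2 * Real.sqrt (x t 0 ^ 2 + x t 1 ^ 2)) *
        (2 * x t 0 * deriv x t 0 + 2 * x t 1 * deriv x t 1)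
        = (x t 0 * deriv x t 0 + x t 1 * deriv x t 1) / ‖x t‖ := by
      rw [← hr2 t, Real.sqrt_sq (norm_nonneg _)]
      field_simp
    rwa [hval] at hs
  -- Kepler's second law
  have hcd : ∀ t, HasDerivAt (fun s => cross (x s) (deriv x s)) 0 t := by
    intro t
    have h1 := ((hux 0 t).mul (hvx 1 t)).sub ((hux 1 t).mul (hvx 0 t))
    have hval : (deriv x t 0 * deriv x t 1 + x t 0 * ((-(K / ‖x t‖ ^ 3)) * x t 1)) -
        (deriv x t 1 * deriv x t 0 + x t 1 * ((-(K / ‖x t‖ ^ 3)) * x t 0)) = 0 := by ring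
    rw [hval] at h1
    exact h1
  set h : ℝ := cross (x 0) (deriv x 0) with hh
  have hconst : ∀ t, cross (x t) (deriv x t) = h := by
    intro t
    exact is_const_of_deriv_eq_zero (fun s => (hcd s).differentiableAt)
      (fun s => (hcd s).deriv) t 0
  refine ⟨h, fun t => by rw [hconst t]; ring, ?_⟩
  -- eccentricity vector components as functions of time
  set g0 : ℝ → ℝ := fun s => h / K * deriv x s 1 - x s 0 / ‖x s‖ with hg0
  set g1 : ℝ → ℝ := fun s => -(h / K * deriv x s 0) - x s 1 / ‖x s‖ with hg1
  have hg0d : ∀ t, HasDerivAt g0 0 t := by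
    intro t
    have hA : HasDerivAt (fun s => h / K * deriv x s 1)
        (h / K * ((-(K / ‖x t‖ ^ 3)) * x t 1)) t := (hvx 1 t).const_mul _
    have hB := (hux 0 t).div (hrd t) (rne t)
    have h1 := hA.sub hB
    have hc := hconst t
    simp only [cross] at hc
    have hval : h / K * ((-(K / ‖x t‖ ^ 3)) * x t 1) -
        (deriv x t 0 * ‖x t‖ - x t 0 * ((x t 0 * deriv x t 0 + x t 1 * deriv x t 1) / ‖x t‖)) /
          ‖x t‖ ^ 2 = 0 := by
      rw [← hc]
      exact aux1 _ _ _ _ _ _ hK (rpos t) (hr2 t)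
    rw [hval] at h1
    exact h1
  have hg1d : ∀ t, HasDerivAt g1 0 t := by
    intro t
    have hA : HasDerivAt (fun s => -(h / K * deriv x s 0))
        (-(h / K * ((-(K / ‖x t‖ ^ 3)) * x t 0))) t := ((hvx 0 t).const_mul _).neg
    have hB := (hux 1 t).div (hrd t) (rne t)
    have h1 := hA.sub hB
    have hc := hconst t
    simp only [cross] at hc
    have hval : -(h / K * ((-(K / ‖x t‖ ^ 3)) * x t 0)) -
        (deriv x t 1 * ‖x t‖ - x t 1 * ((x t 0 * deriv x t 0 + x t 1 * deriv x t 1) / ‖x t‖)) /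
          ‖x t‖ ^ 2 = 0 := by
      rw [← hc]
      exact aux2 _ _ _ _ _ _ hK (rpos t) (hr2 t)
    rw [hval] at h1
    exact h1
  have hg0c : ∀ t, g0 t = g0 0 := fun t =>
    is_const_of_deriv_eq_zero (fun s => (hg0d s).differentiableAt)
      (fun s => (hg0d s).deriv) t 0
  have hg1c : ∀ t, g1 t = g1 0 := fun t =>
    is_const_of_deriv_eq_zero (fun s => (hg1d s).differentiableAt)
      (fun s => (hg1d s).deriv) t 0
  refine ⟨(WithLp.equiv 2 (Fin 2 → ℝ)).symm ![g0 0, g1 0], fun t => ?_⟩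
  have hinner : ⟪(WithLp.equiv 2 (Fin 2 → ℝ)).symm ![g0 0, g1 0], x t⟫
      = g0 0 * x t 0 + g1 0 * x t 1 := by
    simp [PiLp.inner_apply, Fin.sum_univ_two, RCLike.inner_apply]
    ring
  rw [hinner, ← hg0c t, ← hg1c t]
  have hc := hconst t
  simp only [cross] at hc
  simp only [hg0, hg1]
  rw [← hc]
  exact aux3 _ _ _ _ _ _ hK (rpos t) (hr2 t)
end
end

section
/- The inverse-distance law is not equivalent to the area law on a genuine ellipse: let x : ℝ → ℝ² be a twice differentiable curve, a > 0, and f ∈ ℝ² with 0 < ‖f‖ < 2a (so the ellipse has positive eccentricity). Assume that for every t, ‖x(t)‖ + ‖x(t) − f‖ = 2a and x(t) ≠ 0, and that the area law holds with nonzero constant: x(t) × x'(t) = h for all t, with h ≠ 0. Then there is no constant c such that ‖x(t)‖·‖x'(t)‖ = c for all t; i.e. the speed of the planet is not inversely proportional to its distance from the Sun. -/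
noncomputable section

open scoped RealInnerProductSpace

/-- Inner product in coordinates. -/
lemma inner_coords (u v : EuclideanSpace ℝ (Fin 2)) :
    (⟪u, v⟫ : ℝ) = u 0 * v 0 + u 1 * v 1 := by
  simp [PiLp.inner_apply, Fin.sum_univ_two]
  ring

/-- Pythagoras-type identity: `cross² + ⟪·,·⟫² = ‖u‖²‖v‖²`. -/
lemma cross_sq_add_inner_sq (u v : EuclideanSpace ℝ (Fin 2)) :
    cross u v ^ 2 + (⟪u, v⟫ : ℝ) ^ 2 = ‖u‖ ^ 2 * ‖v‖ ^ 2 := by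
  rw [← real_inner_self_eq_norm_sq, ← real_inner_self_eq_norm_sq,
    inner_coords, inner_coords, inner_coords]
  simp only [cross]; ring

/-- A continuous real function with constant square is constant. -/
lemma const_of_sq_const (g : ℝ → ℝ) (hg : Continuous g)
    (hsq : ∀ t, g t ^ 2 = g 0 ^ 2) : ∀ t, g t = g 0 := by
  intro t
  have habs : g t = g 0 ∨ g t = -g 0 := sq_eq_sq_iff_eq_or_eq_neg.mp (hsq t)
  rcases habs with h | h
  · exact h
  · by_cases h0 : g 0 = 0
    · rw [h, h0, neg_zero]
    · exfalso
      have hmem : (0 : ℝ) ∈ Set.uIcc (g 0) (g t) := by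
        rw [h]
        rcases le_or_gt (g 0) 0 with h' | h'
        · exact Set.mem_uIcc.mpr (Or.inl ⟨h', by linarith⟩)
        · exact Set.mem_uIcc.mpr (Or.inr ⟨by linarith, le_of_lt h'⟩)
      have := intermediate_value_uIcc (a := (0 : ℝ)) (b := t) (hg.continuousOn)
      obtain ⟨s, _, hs⟩ := this hmem
      have hzsq := hsq s
      rw [hs] at hzsq
      exact h0 (pow_eq_zero_iff two_ne_zero |>.mp (by linarith [hzsq]))

/-- On a genuine ellipse (positive eccentricity, focus at the origin) obeying
the area law with nonzero constant, the speed is not inversely proportional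
to the distance from the Sun: `‖x(t)‖·‖x'(t)‖` is not constant. -/
theorem inverse_distance_law_fails_on_ellipse
    (x : ℝ → EuclideanSpace ℝ (Fin 2))
    (hx : Differentiable ℝ x) (hx' : Differentiable ℝ (deriv x))
    (a : ℝ) (ha : 0 < a)
    (f : EuclideanSpace ℝ (Fin 2)) (hf0 : f ≠ 0) (hf : ‖f‖ < 2 * a)
    (hellipse : ∀ t : ℝ, ‖x t‖ + ‖x t - f‖ = 2 * a)
    (hne : ∀ t : ℝ, x t ≠ 0)
    (h : ℝ) (hh : h ≠ 0)
    (harea : ∀ t : ℝ, cross (x t) (deriv x t) = h) :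
    ¬ ∃ c : ℝ, ∀ t : ℝ, ‖x t‖ * ‖deriv x t‖ = c := by
  rintro ⟨c, hc⟩
  set g : ℝ → ℝ := fun t => (⟪x t, deriv x t⟫ : ℝ) with hgdef
  -- g² is constant
  have hsq : ∀ t, g t ^ 2 = c ^ 2 - h ^ 2 := by
    intro t
    have := cross_sq_add_inner_sq (x t) (deriv x t)
    rw [harea t] at this
    have hnorm : ‖x t‖ ^ 2 * ‖deriv x t‖ ^ 2 = c ^ 2 := by
      rw [← mul_pow, hc t]
    simp only [hgdef]
    nlinarith [this, hnorm]
  have hgcont : Continuous g :=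
    (hx.continuous).inner (hx'.continuous)
  have hgconst : ∀ t, g t = g 0 :=
    const_of_sq_const g hgcont (fun t => by rw [hsq t, hsq 0])
  -- derivative of ⟪x t, x t⟫ is 2 g t
  have hD : ∀ t, HasDerivAt (fun s => (⟪x s, x s⟫ : ℝ)) (2 * g t) t := by
    intro t
    have h1 := (hx t).hasDerivAt
    have := h1.inner ℝ h1
    convert this using 1 <;> try rfl
    simp only [hgdef]
    rw [real_inner_comm]
    ring
  -- the function F t = ⟪x t, x t⟫ - 2 g 0 * t has zero derivative
  set F : ℝ → ℝ := fun t => (⟪x t, x t⟫ : ℝ) - 2 * g 0 * t with hFdef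
  have hFD : ∀ t, HasDerivAt F 0 t := by
    intro t
    have hD2 : HasDerivAt F (2 * g t - 2 * g 0 * 1) t :=
      (hD t).sub ((hasDerivAt_id t).const_mul (2 * g 0))
    have h2 : 2 * g t - 2 * g 0 * 1 = 0 := by rw [hgconst t]; ring
    rwa [h2] at hD2
  have hFconst : ∀ t, F t = F 0 := fun t =>
    is_const_of_deriv_eq_zero (fun s => (hFD s).differentiableAt)
      (fun s => (hFD s).deriv) t 0
  -- boundedness of ‖x t‖
  have hbound : ∀ t, ‖x t‖ ≤ 2 * a := by
    intro t
    have := hellipse t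
    have := norm_nonneg (x t - f)
    linarith
  -- g 0 = 0
  have hg0 : g 0 = 0 := by
    by_contra hg0ne
    set t₀ : ℝ := ((2 * a) ^ 2 - ⟪x 0, x 0⟫ + 1) / (2 * g 0) with ht₀
    have h2g : (2 * g 0) ≠ 0 := by simpa using hg0ne
    have hFt : F t₀ = F 0 := hFconst t₀
    have hval : (⟪x t₀, x t₀⟫ : ℝ) = ⟪x 0, x 0⟫ + 2 * g 0 * t₀ := by
      simp only [hFdef] at hFt; linarith
    rw [ht₀, mul_div_cancel₀ _ h2g] at hval
    have hb := hbound t₀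
    have hb2 : (⟪x t₀, x t₀⟫ : ℝ) ≤ (2 * a) ^ 2 := by
      rw [real_inner_self_eq_norm_sq]
      nlinarith [norm_nonneg (x t₀), hbound t₀]
    linarith
  -- so ⟪x t, x t⟫ is constant and ⟪x t, deriv x t⟫ = 0
  have hinner0 : ∀ t, (⟪x t, deriv x t⟫ : ℝ) = 0 := by
    intro t; have := hgconst t; rw [hg0] at this; exact this
  have hr2 : ∀ t, (⟪x t, x t⟫ : ℝ) = ⟪x 0, x 0⟫ := by
    intro t
    have := hFconst t
    simp only [hFdef, hg0] at this
    linarith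
  set r2 : ℝ := (⟪x 0, x 0⟫ : ℝ) with hr2def
  have hr2pos : 0 < r2 := by
    rw [hr2def, real_inner_self_eq_norm_sq]
    exact pow_pos (norm_pos_iff.mpr (hne 0)) 2
  -- norms are constant
  have hnormconst : ∀ t, ‖x t‖ = ‖x 0‖ := by
    intro t
    have h1 : ‖x t‖ ^ 2 = ‖x 0‖ ^ 2 := by
      rw [← real_inner_self_eq_norm_sq, ← real_inner_self_eq_norm_sq]
      exact hr2 t
    nlinarith [norm_nonneg (x t), norm_nonneg (x 0)]
  -- ⟪x t, f⟫ is constant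
  have hk : ∀ t, (⟪x t, f⟫ : ℝ) = ⟪x 0, f⟫ := by
    intro t
    have h1 : ‖x t - f‖ = ‖x 0 - f‖ := by
      have e1 := hellipse t
      have e2 := hellipse 0
      rw [hnormconst t] at e1
      linarith
    have e1 : ‖x t - f‖ ^ 2 = ‖x t‖ ^ 2 - 2 * ⟪x t, f⟫ + ‖f‖ ^ 2 :=
      norm_sub_sq_real (x t) f
    have e2 : ‖x 0 - f‖ ^ 2 = ‖x 0‖ ^ 2 - 2 * ⟪x 0, f⟫ + ‖f‖ ^ 2 :=
      norm_sub_sq_real (x 0) f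
    rw [h1] at e1
    rw [hnormconst t] at e1
    linarith
  set k : ℝ := (⟪x 0, f⟫ : ℝ) with hkdef
  -- derivative of ⟪x t, f⟫ is ⟪deriv x t, f⟫, and the function is constant, so it's 0
  have hxf0 : ∀ t, (⟪deriv x t, f⟫ : ℝ) = 0 := by
    intro t
    have hDf : HasDerivAt (fun s => (⟪x s, f⟫ : ℝ)) (⟪deriv x t, f⟫) t := by
      have := ((hx t).hasDerivAt).inner ℝ (hasDerivAt_const t f)
      simpa using this
    have hconstf : (fun s => (⟪x s, f⟫ : ℝ)) = fun _ => k := by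
      funext s; exact hk s
    have := hDf.deriv
    rw [hconstf, deriv_const] at this
    exact this.symm
  -- componentwise algebra: r2 • f = k • x t
  have hcomp : ∀ t, ∀ i : Fin 2, r2 * f i = k * x t i := by
    intro t
    have e1 : x t 0 * deriv x t 0 + x t 1 * deriv x t 1 = 0 := by
      have := hinner0 t; rwa [inner_coords] at this
    have e2 : deriv x t 0 * f 0 + deriv x t 1 * f 1 = 0 := by
      have := hxf0 t; rwa [inner_coords] at this
    have e3 : x t 0 * x t 0 + x t 1 * x t 1 = r2 := by
      have := hr2 t; rwa [inner_coords] at this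
    have e4 : x t 0 * f 0 + x t 1 * f 1 = k := by
      have := hk t; rwa [inner_coords] at this
    have e5 : x t 0 * deriv x t 1 - x t 1 * deriv x t 0 = h := harea t
    -- cross (x t) f = 0
    have hcf : x t 0 * f 1 - x t 1 * f 0 = 0 := by
      have key : h * (x t 0 * f 1 - x t 1 * f 0) = 0 := by
        linear_combination (-(x t 0 * f 1 - x t 1 * f 0)) * e5 +
          (x t 0 * x t 0 + x t 1 * x t 1) * e2 - (x t 0 * f 0 + x t 1 * f 1) * e1
      exact (mul_eq_zero.mp key).resolve_left hh
    have H0 : r2 * f 0 = k * x t 0 := by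
      linear_combination (-(f 0)) * e3 + x t 0 * e4 - x t 1 * hcf
    have H1 : r2 * f 1 = k * x t 1 := by
      linear_combination (-(f 1)) * e3 + x t 1 * e4 + x t 0 * hcf
    intro i
    fin_cases i
    · exact H0
    · exact H1
  -- k ≠ 0
  have hkne : k ≠ 0 := by
    intro hk0
    apply hf0
    ext i
    have h' := hcomp 0 i
    rw [hk0, zero_mul] at h'
    have : f i = 0 := (mul_eq_zero.mp h').resolve_left (ne_of_gt hr2pos)
    simpa using this
  -- x is constant
  have hxconst : x = fun _ => (r2 / k) • f := by
    funext t
    ext i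
    have := hcomp t i
    have hsmul : ((r2 / k) • f) i = (r2 / k) * f i := rfl
    rw [hsmul]
    field_simp
    linarith [hcomp t i]
  -- contradiction: deriv x = 0 so cross = 0 ≠ h
  have hd0 : deriv x 0 = 0 := by
    rw [hxconst]
    exact deriv_const 0 _
  have := harea 0
  rw [hd0] at this
  simp only [cross] at this
  have hz : (0 : EuclideanSpace ℝ (Fin 2)) 0 = 0 := rfl
  have hz1 : (0 : EuclideanSpace ℝ (Fin 2)) 1 = 0 := rfl
  rw [hz, hz1] at this
  apply hh
  linarith [this]
end
end
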